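/- For every κ > 0, every t > 0 and every x ∈ ℝ, the one-dimensional Mehler kernel satisfies the exact row-integral identity ∫_ℝ G_κ(x,y;t) dy = (cosh(κt))^{−1/2} · exp(−(κ/2)·x²·tanh(κt)); in particular ∫_ℝ G_κ(x,y;t) dy ≤ (cosh(κt))^{−1/2} for every x ∈ ℝ. -/

import Mathlib

open Real MeasureTheory

/-- The one-dimensional Mehler kernel. Here `cosh/sinh` plays the role of `coth`. -/
noncomputable def mehler (κ t x y : ℝ) : ℝ :=
  Real.sqrt (κ / (2 * Real.pi * Real.sinh (κ * t))) *
    Real.exp (-(κ / 4) * ((x + y) ^ 2 * Real.tanh (κ * t / 2) +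
      (x - y) ^ 2 * (Real.cosh (κ * t / 2) / Real.sinh (κ * t / 2))))

/-- Exact row-integral identity for the one-dimensional Mehler kernel, and the resulting
uniform bound. -/
theorem mehler_row_integral (κ t x : ℝ) (hκ : 0 < κ) (ht : 0 < t) :
    (∫ y : ℝ, mehler κ t x y =
        (Real.cosh (κ * t)) ^ (-(1 : ℝ) / 2) *
          Real.exp (-(κ / 2) * x ^ 2 * Real.tanh (κ * t))) ∧
      ∫ y : ℝ, mehler κ t x y ≤ (Real.cosh (κ * t)) ^ (-(1 : ℝ) / 2) := by
  have hs0 : 0 < κ * t := mul_pos hκ ht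
  have hp0 : 0 < κ * t / 2 := by linarith
  set cp := Real.cosh (κ * t / 2) with hcp
  set sp := Real.sinh (κ * t / 2) with hsp
  have hsp0 : 0 < sp := Real.sinh_pos_iff.mpr hp0
  have hcp0 : 0 < cp := Real.cosh_pos _
  have hpyth : cp ^ 2 - sp ^ 2 = 1 := by
    simpa [hcp, hsp, sq] using Real.cosh_sq_sub_sinh_sq (κ * t / 2)
  have hsinh : Real.sinh (κ * t) = 2 * sp * cp := by
    rw [show κ * t = 2 * (κ * t / 2) by ring, Real.sinh_two_mul]
  have hcosh : Real.cosh (κ * t) = cp ^ 2 + sp ^ 2 := by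
    rw [show κ * t = 2 * (κ * t / 2) by ring, Real.cosh_two_mul]
  have htanh : Real.tanh (κ * t) = 2 * sp * cp / (cp ^ 2 + sp ^ 2) := by
    rw [Real.tanh_eq_sinh_div_cosh, hsinh, hcosh]
  have htanhp : Real.tanh (κ * t / 2) = sp / cp := Real.tanh_eq_sinh_div_cosh _
  have hsum0 : 0 < cp ^ 2 + sp ^ 2 := by positivity
  set b := κ * ((cp ^ 2 + sp ^ 2) / (sp * cp)) / 4 with hb
  have hb0 : 0 < b := by
    rw [hb]; positivity
  set m := x * ((sp ^ 2 - cp ^ 2) / (cp ^ 2 + sp ^ 2)) with hm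
  set e := -κ * x ^ 2 * (sp * cp) / (cp ^ 2 + sp ^ 2) with he
  set C := Real.sqrt (κ / (2 * Real.pi * Real.sinh (κ * t))) with hC
  have key : ∀ y : ℝ, mehler κ t x y =
      (C * Real.exp e) * Real.exp (-b * (y + m) ^ 2) := by
    intro y
    simp only [mehler, ← hC, ← hcp, ← hsp]
    rw [mul_assoc, ← Real.exp_add]
    congr 1
    rw [htanhp, hb, hm, he]
    congr 1
    field_simp
    ring
  have hInt : ∫ y : ℝ, mehler κ t x y = (C * Real.exp e) * Real.sqrt (π / b) := by
    simp only [key]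
    rw [MeasureTheory.integral_const_mul]
    congr 1
    have h1 : ∫ y : ℝ, Real.exp (-b * (y + m) ^ 2) = ∫ y : ℝ, Real.exp (-b * y ^ 2) :=
      integral_add_right_eq_self (fun u => Real.exp (-b * u ^ 2)) m
    rw [h1, integral_gaussian]
  have hpre : C * Real.sqrt (π / b) = (Real.cosh (κ * t)) ^ (-(1 : ℝ) / 2) := by
    rw [hC, ← Real.sqrt_mul (by positivity)]
    have harg : κ / (2 * Real.pi * Real.sinh (κ * t)) * (π / b) = (Real.cosh (κ * t))⁻¹ := by
      rw [hsinh, hcosh, hb]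
      field_simp
      ring
    rw [harg]
    rw [show -(1 : ℝ) / 2 = -(1 / 2) by ring, Real.rpow_neg ((Real.cosh_pos _).le),
      ← Real.sqrt_eq_rpow, ← Real.sqrt_inv]
  have hexp : e = -(κ / 2) * x ^ 2 * Real.tanh (κ * t) := by
    rw [htanh, he]
    field_simp
  have hmain : ∫ y : ℝ, mehler κ t x y =
      (Real.cosh (κ * t)) ^ (-(1 : ℝ) / 2) *
        Real.exp (-(κ / 2) * x ^ 2 * Real.tanh (κ * t)) := by
    rw [hInt, ← hexp, ← hpre]; ring
  refine ⟨hmain, ?_⟩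
  rw [hmain]
  have h1 : Real.exp (-(κ / 2) * x ^ 2 * Real.tanh (κ * t)) ≤ 1 := by
    rw [Real.exp_le_one_iff]
    have htnn : 0 ≤ Real.tanh (κ * t) := by rw [htanh]; positivity
    nlinarith [mul_nonneg (mul_nonneg (by positivity : (0:ℝ) ≤ κ / 2) (sq_nonneg x)) htnn]
  have h2 : 0 < (Real.cosh (κ * t)) ^ (-(1 : ℝ) / 2) :=
    Real.rpow_pos_of_pos (Real.cosh_pos _) _
  nlinarith [mul_le_mul_of_nonneg_left h1 h2.le]
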